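/- The probabilistic bisector of two equi-range 1D objects is unaffected by the presence of a third object: let o₁ = [l₁,u₁], o₂ = [l₂,u₂] and o₃ = [l₃,u₃] be three uncertain 1D objects, modeled by the triple product measure U[l₁,u₁] ⊗ U[l₂,u₂] ⊗ U[l₃,u₃], such that u₁ − l₁ = u₂ − l₂ and the midpoints m₁ = (l₁+u₁)/2 and m₂ = (l₂+u₂)/2 are distinct. Then at the point b = (m₁+m₂)/2, the probability that o₁ is strictly the nearest of the three objects to b equals the probability that o₂ is strictly the nearest of the three objects to b; that is, the product measure of {(x,y,z) | |x−b| < |y−b| and |x−b| < |z−b|} equals the product measure of {(x,y,z) | |y−b| < |x−b| and |y−b| < |z−b|}. -/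

import Mathlib

open MeasureTheory
open scoped ENNReal

/-- The uniform probability measure on the closed interval `[a, b]`. -/
noncomputable def unif (a b : ℝ) : Measure ℝ :=
  (volume (Set.Icc a b))⁻¹ • volume.restrict (Set.Icc a b)

lemma unif_prob {a c : ℝ} (h : a < c) : IsProbabilityMeasure (unif a c) := by
  constructor
  rw [unif, Measure.smul_apply, Measure.restrict_apply MeasurableSet.univ, Set.univ_inter,
    smul_eq_mul]
  rw [ENNReal.inv_mul_cancel]
  · simp [Real.volume_Icc]; linarith
  · simp [Real.volume_Icc]

instance unif_sfinite (a c : ℝ) : SFinite (unif a c) := by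
  unfold unif; infer_instance

lemma unif_map_reflect (a c b : ℝ) (h : a < c) :
    (unif a c).map (fun x => 2*b - x) = unif (2*b - c) (2*b - a) := by
  have hmp : MeasurePreserving (fun x : ℝ => 2*b - x) volume volume :=
    Measure.measurePreserving_sub_left volume (2*b)
  have hpre : (fun x : ℝ => 2*b - x) ⁻¹' Set.Icc (2*b - c) (2*b - a) = Set.Icc a c := by
    ext x
    simp only [Set.mem_preimage, Set.mem_Icc]
    constructor <;> intro ⟨h1, h2⟩ <;> constructor <;> linarith
  have hvol : volume (Set.Icc (2*b - c) (2*b - a)) = volume (Set.Icc a c) := by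
    rw [Real.volume_Icc, Real.volume_Icc]; ring_nf
  have : Measure.map (fun x : ℝ => 2*b - x) (volume.restrict (Set.Icc a c))
      = volume.restrict (Set.Icc (2*b - c) (2*b - a)) := by
    rw [← hpre, ← Measure.restrict_map hmp.measurable measurableSet_Icc, hmp.map_eq]
  rw [unif, unif, Measure.map_smul, hvol, this]

theorem prob_bisector_equi_range_unaffected_by_third_object
    (l₁ u₁ l₂ u₂ l₃ u₃ b : ℝ)
    (h₁ : l₁ < u₁) (h₂ : l₂ < u₂) (h₃ : l₃ < u₃)
    (hlen : u₁ - l₁ = u₂ - l₂)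
    (hmid : (l₁ + u₁) / 2 ≠ (l₂ + u₂) / 2)
    (hb : b = ((l₁ + u₁) / 2 + (l₂ + u₂) / 2) / 2) :
    ((unif l₁ u₁).prod ((unif l₂ u₂).prod (unif l₃ u₃)))
        {p : ℝ × ℝ × ℝ | |p.1 - b| < |p.2.1 - b| ∧ |p.1 - b| < |p.2.2 - b|}
      = ((unif l₁ u₁).prod ((unif l₂ u₂).prod (unif l₃ u₃)))
        {p : ℝ × ℝ × ℝ | |p.2.1 - b| < |p.1 - b| ∧ |p.2.1 - b| < |p.2.2 - b|} := by
  haveI := unif_prob h₁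
  haveI := unif_prob h₂
  haveI := unif_prob h₃
  set U₁ := unif l₁ u₁
  set U₂ := unif l₂ u₂
  set U₃ := unif l₃ u₃
  have e1 : 2*b - u₂ = l₁ := by rw [hb]; linarith
  have e2 : 2*b - l₂ = u₁ := by rw [hb]; linarith
  have e3 : 2*b - u₁ = l₂ := by rw [hb]; linarith
  have e4 : 2*b - l₁ = u₂ := by rw [hb]; linarith
  have hf12 : MeasurePreserving (fun x : ℝ => 2*b - x) U₂ U₁ :=
    ⟨(measurable_const.sub measurable_id), by rw [unif_map_reflect _ _ _ h₂, e1, e2]⟩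
  have hf21 : MeasurePreserving (fun x : ℝ => 2*b - x) U₁ U₂ :=
    ⟨(measurable_const.sub measurable_id), by rw [unif_map_reflect _ _ _ h₁, e3, e4]⟩
  -- σ : (x,(y,z)) ↦ (y,(x,z)), measure preserving from ν to ν' := U₂.prod (U₁.prod U₃)
  have hσ : MeasurePreserving (fun p : ℝ × ℝ × ℝ => (p.2.1, (p.1, p.2.2)))
      (U₁.prod (U₂.prod U₃)) (U₂.prod (U₁.prod U₃)) := by
    have h1 : MeasurePreserving (MeasurableEquiv.prodAssoc.symm :
        ℝ × ℝ × ℝ ≃ᵐ (ℝ × ℝ) × ℝ) (U₁.prod (U₂.prod U₃)) ((U₁.prod U₂).prod U₃) :=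
      (measurePreserving_prodAssoc U₁ U₂ U₃).symm _
    have h2 : MeasurePreserving (Prod.map (Prod.swap : ℝ × ℝ → ℝ × ℝ) (id : ℝ → ℝ))
        ((U₁.prod U₂).prod U₃) ((U₂.prod U₁).prod U₃) :=
      (Measure.measurePreserving_swap).prod (MeasurePreserving.id _)
    have h3 : MeasurePreserving (MeasurableEquiv.prodAssoc :
        (ℝ × ℝ) × ℝ ≃ᵐ ℝ × ℝ × ℝ) ((U₂.prod U₁).prod U₃) (U₂.prod (U₁.prod U₃)) :=
      measurePreserving_prodAssoc U₂ U₁ U₃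
    have := (h3.comp h2).comp h1
    convert this using 1
    funext p; rfl
  -- g : (y,(x,z)) ↦ (2b-y, (2b-x, z)) pres. from ν' to ν
  have hg : MeasurePreserving
      (Prod.map (fun x : ℝ => 2*b - x) (Prod.map (fun x : ℝ => 2*b - x) (id : ℝ → ℝ)))
      (U₂.prod (U₁.prod U₃)) (U₁.prod (U₂.prod U₃)) :=
    hf12.prod (hf21.prod (MeasurePreserving.id _))
  have hT : MeasurePreserving (fun p : ℝ × ℝ × ℝ => (2*b - p.2.1, (2*b - p.1, p.2.2)))
      (U₁.prod (U₂.prod U₃)) (U₁.prod (U₂.prod U₃)) := by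
    have := hg.comp hσ
    convert this using 1
    funext p; rfl
  have hS : MeasurableSet {p : ℝ × ℝ × ℝ | |p.1 - b| < |p.2.1 - b| ∧ |p.1 - b| < |p.2.2 - b|} := by
    apply MeasurableSet.inter
    · exact measurableSet_lt ((measurable_fst.sub measurable_const).abs)
        ((measurable_snd.fst.sub measurable_const).abs)
    · exact measurableSet_lt ((measurable_fst.sub measurable_const).abs)
        ((measurable_snd.snd.sub measurable_const).abs)
  have key := hT.measure_preimage hS.nullMeasurableSet
  have hpre : (fun p : ℝ × ℝ × ℝ => (2*b - p.2.1, (2*b - p.1, p.2.2))) ⁻¹'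
      {p : ℝ × ℝ × ℝ | |p.1 - b| < |p.2.1 - b| ∧ |p.1 - b| < |p.2.2 - b|}
      = {p : ℝ × ℝ × ℝ | |p.2.1 - b| < |p.1 - b| ∧ |p.2.1 - b| < |p.2.2 - b|} := by
    ext p
    simp only [Set.mem_preimage, Set.mem_setOf_eq]
    have a1 : |2*b - p.2.1 - b| = |p.2.1 - b| := by rw [show 2*b - p.2.1 - b = -(p.2.1 - b) by ring, abs_neg]
    have a2 : |2*b - p.1 - b| = |p.1 - b| := by rw [show 2*b - p.1 - b = -(p.1 - b) by ring, abs_neg]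
    rw [a1, a2]
  rw [← hpre] at *
  exact key.symm
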